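/- Let r(x) = (1/2)‖Ax − b‖² with A = [A₁,…,Aₙ] block-partitioned, and let Gᵢ ∈ ℝ^{pᵢ×pᵢ} be symmetric with Gᵢ ⪰ Lᵢ' − AᵢᵀAᵢ where the Lᵢ' are PSD matrices such that (1/2)‖A(x−y)‖² ≤ (1/2)∑ᵢ ‖xᵢ−yᵢ‖²_{Lᵢ'} for all x,y. Then for any x, y: (1/2)‖Ax−b‖² ≤ (1/2)∑ᵢ₌₁ⁿ ‖Aᵢxᵢ + ∑_{j≠i} Aⱼyⱼ − b‖² + (1/2)∑ᵢ ‖xᵢ−yᵢ‖²_{Gᵢ} + ((1−n)/2)‖Ay−b‖². -/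

import Mathlib

open Matrix

/-- Jacobian separable majorant of the quadratic coupling term (Lemma 3(2)). -/
theorem stmt_13 {n d : ℕ} (p : Fin n → ℕ)
    (A : ∀ i, Matrix (Fin d) (Fin (p i)) ℝ) (b : Fin d → ℝ)
    (L' G : ∀ i, Matrix (Fin (p i)) (Fin (p i)) ℝ)
    (hL'psd : ∀ i, (L' i).PosSemidef)
    (hGsymm : ∀ i, (G i).IsSymm)
    (hG : ∀ i, (G i - (L' i - (A i)ᵀ * A i)).PosSemidef)
    (hL' : ∀ x y : ∀ i, Fin (p i) → ℝ,
      (1/2) * ((∑ i, A i *ᵥ (x i - y i)) ⬝ᵥ (∑ i, A i *ᵥ (x i - y i)))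
        ≤ (1/2) * ∑ i, (x i - y i) ⬝ᵥ (L' i *ᵥ (x i - y i)))
    (x y : ∀ i, Fin (p i) → ℝ) :
    (1/2) * ((∑ i, A i *ᵥ x i - b) ⬝ᵥ (∑ i, A i *ᵥ x i - b))
      ≤ (1/2) * ∑ i, ((A i *ᵥ x i + (∑ j, A j *ᵥ y j - A i *ᵥ y i) - b)
            ⬝ᵥ (A i *ᵥ x i + (∑ j, A j *ᵥ y j - A i *ᵥ y i) - b))
        + (1/2) * ∑ i, (x i - y i) ⬝ᵥ (G i *ᵥ (x i - y i))
        + ((1 - (n : ℝ))/2) * ((∑ i, A i *ᵥ y i - b) ⬝ᵥ (∑ i, A i *ᵥ y i - b)) := by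
  classical
  set z : ∀ i, Fin (p i) → ℝ := fun i => x i - y i with hz
  set dv : Fin n → (Fin d → ℝ) := fun i => A i *ᵥ z i with hdv
  set v : Fin d → ℝ := (∑ i, A i *ᵥ y i) - b with hv
  have hdv' : ∀ i, dv i = A i *ᵥ x i - A i *ᵥ y i := by
    intro i; simp [hdv, hz, Matrix.mulVec_sub]
  -- key inequality
  have hterm : ∀ i, z i ⬝ᵥ (L' i *ᵥ z i) ≤ dv i ⬝ᵥ dv i + z i ⬝ᵥ (G i *ᵥ z i) := by
    intro i
    have hp := (hG i).dotProduct_mulVec_nonneg (z i)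
    simp only [star_trivial, Matrix.sub_mulVec, dotProduct_sub,
      ← Matrix.mulVec_mulVec, Matrix.dotProduct_mulVec (z i) (A i)ᵀ,
      Matrix.vecMul_transpose] at hp
    have : (A i *ᵥ z i) ⬝ᵥ (A i *ᵥ z i) = dv i ⬝ᵥ dv i := by rw [hdv]
    linarith [hp]
  have key : (∑ i, dv i) ⬝ᵥ (∑ i, dv i)
      ≤ ∑ i, dv i ⬝ᵥ dv i + ∑ i, z i ⬝ᵥ (G i *ᵥ z i) := by
    have h1 := hL' x y
    change (1/2) * ((∑ i, dv i) ⬝ᵥ (∑ i, dv i)) ≤ (1/2) * ∑ i, z i ⬝ᵥ (L' i *ᵥ z i) at h1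
    have h2 : ∑ i, z i ⬝ᵥ (L' i *ᵥ z i)
        ≤ ∑ i, (dv i ⬝ᵥ dv i + z i ⬝ᵥ (G i *ᵥ z i)) :=
      Finset.sum_le_sum fun i _ => hterm i
    rw [Finset.sum_add_distrib] at h2
    linarith
  -- rewrite goal vectors
  have e1 : (∑ i, A i *ᵥ x i) - b = (∑ i, dv i) + v := by
    rw [hv]
    have : (∑ i, dv i) = (∑ i, A i *ᵥ x i) - ∑ i, A i *ᵥ y i := by
      rw [← Finset.sum_sub_distrib]
      exact Finset.sum_congr rfl fun i _ => hdv' i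
    rw [this]; abel
  have e2 : ∀ i, A i *ᵥ x i + ((∑ j, A j *ᵥ y j) - A i *ᵥ y i) - b = dv i + v := by
    intro i; rw [hdv' i, hv]; abel
  have exp : ∀ (a c : Fin d → ℝ), (a + c) ⬝ᵥ (a + c) = a ⬝ᵥ a + 2 * (a ⬝ᵥ c) + c ⬝ᵥ c := by
    intro a c
    simp only [add_dotProduct, dotProduct_add, dotProduct_comm c a]
    ring
  rw [e1]
  have e3 : ∀ i, (A i *ᵥ x i + ((∑ j, A j *ᵥ y j) - A i *ᵥ y i) - b)
      ⬝ᵥ (A i *ᵥ x i + ((∑ j, A j *ᵥ y j) - A i *ᵥ y i) - b)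
      = dv i ⬝ᵥ dv i + 2 * (dv i ⬝ᵥ v) + v ⬝ᵥ v := by
    intro i; rw [e2 i, exp]
  simp only [e3]
  rw [exp]
  have e4 : ∑ i, (dv i ⬝ᵥ dv i + 2 * (dv i ⬝ᵥ v) + v ⬝ᵥ v)
      = (∑ i, dv i ⬝ᵥ dv i) + 2 * ((∑ i, dv i) ⬝ᵥ v) + (n : ℝ) * (v ⬝ᵥ v) := by
    have sumdot : (∑ i, dv i) ⬝ᵥ v = ∑ i, dv i ⬝ᵥ v := by
      simp only [dotProduct, Finset.sum_apply, Finset.sum_mul]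
      rw [Finset.sum_comm]
    rw [Finset.sum_add_distrib, Finset.sum_add_distrib, Finset.sum_const,
      Finset.card_fin, sumdot, Finset.mul_sum, nsmul_eq_mul]
  rw [e4]
  nlinarith [key]
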